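/- Let k ≥ 2, let p ∈ [1, ∞), let N ≥ 1 and let a : Fin N → Fin k → (AddCircle 1 → ℂ) be functions, each lying in L^{kp} of the circle ℝ/ℤ with normalized Lebesgue (Haar) measure. Define g : (Fin k → AddCircle 1) → ℂ by g(x) := ∑_{i : Fin N} ∏_{j : Fin k} a i j (x j), and define f : (Fin (k−1) → AddCircle 1) → ℂ by f(x₁, …, x_{k−1}) := g(x₁, …, x_{k−1}, −x₁ − ⋯ − x_{k−1}). Then ‖f‖_{L^p((AddCircle 1)^{k−1})} ≤ ∑_{i : Fin N} ∏_{j : Fin k} ‖a i j‖_{L^{kp}(AddCircle 1)}. -/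

import Mathlib

open MeasureTheory


instance probAC : IsProbabilityMeasure (volume : Measure (AddCircle (1:ℝ))) :=
  ⟨by simp [AddCircle.measure_univ]⟩

lemma mp_eval {ι : Type*} [Fintype ι] [DecidableEq ι] {X : ι → Type*}
    [∀ i, MeasureSpace (X i)] [∀ i, IsProbabilityMeasure (volume : Measure (X i))]
    (j : ι) :
    MeasurePreserving (fun y : ∀ i, X i => y j) volume volume := by
  refine ⟨measurable_pi_apply j, ?_⟩
  ext s hs
  rw [Measure.map_apply (measurable_pi_apply j) hs,
    show (fun y : ∀ i, X i => y j) ⁻¹' s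
        = Set.pi Set.univ (Function.update (fun i => (Set.univ : Set (X i))) j s) from
      Set.eval_preimage,
    volume_pi, Measure.pi_pi]
  rw [Finset.prod_eq_single j (fun i _ hi => by simp [Function.update_of_ne hi]) (by simp)]
  simp

lemma mp_sum (m : ℕ) :
    MeasurePreserving (fun y : Fin (m + 1) → AddCircle (1:ℝ) => ∑ j, y j) volume volume := by
  set G := AddCircle (1:ℝ)
  have s1 : MeasurePreserving (MeasurableEquiv.piFinSuccAbove (fun _ : Fin (m+1) => G) 0)
      volume ((volume : Measure G).prod (volume : Measure (Fin m → G))) :=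
    measurePreserving_piFinSuccAbove (fun _ => volume) 0
  have s2 : MeasurePreserving Prod.swap
      ((volume : Measure G).prod (volume : Measure (Fin m → G)))
      ((volume : Measure (Fin m → G)).prod (volume : Measure G)) :=
    Measure.measurePreserving_swap
  have s3 : MeasurePreserving (fun p : (Fin m → G) × G => (p.1, (∑ j, p.1 j) + p.2))
      ((volume : Measure (Fin m → G)).prod (volume : Measure G))
      ((volume : Measure (Fin m → G)).prod (volume : Measure G)) := by
    refine MeasurePreserving.skew_product (g := fun (a : Fin m → G) (c : G) => (∑ j, a j) + c)
      (MeasurePreserving.id _) ?_ (ae_of_all _ fun a => ?_)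
    · exact ((Finset.univ.measurable_sum fun j _ => measurable_pi_apply j).comp
        measurable_fst).add measurable_snd
    · exact map_add_left_eq_self volume _
  have s4 : MeasurePreserving (Prod.snd : (Fin m → G) × G → G)
      ((volume : Measure (Fin m → G)).prod (volume : Measure G)) volume := by
    refine ⟨measurable_snd, ?_⟩
    rw [Measure.map_snd_prod]
    simp
  have := ((s4.comp s3).comp s2).comp s1
  convert this using 1
  funext y
  show ∑ j, y j = _
  simp only [Function.comp_apply, MeasurableEquiv.piFinSuccAbove_apply, Prod.swap_prod_mk]
  rw [Fin.sum_univ_succ]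
  show _ = (∑ j : Fin m, y (Fin.succAbove 0 j)) + y 0
  rw [add_comm]
  congr 1

lemma holder_finset {α : Type*} [MeasurableSpace α] {μ : Measure α} [IsProbabilityMeasure μ]
    {ι : Type*} (s : Finset ι) (f : ι → α → ℂ) (P : ι → ENNReal) {q : ENNReal}
    (hf : ∀ j ∈ s, AEStronglyMeasurable (f j) μ)
    (hq : 1 / q = ∑ j ∈ s, 1 / P j) :
    eLpNorm (fun x => ∏ j ∈ s, f j x) q μ ≤ ∏ j ∈ s, eLpNorm (f j) (P j) μ := by
  classical
  induction s using Finset.cons_induction generalizing q with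
  | empty =>
    simp only [Finset.sum_empty, one_div, ENNReal.inv_eq_zero] at hq
    subst hq
    simp only [Finset.prod_empty]
    rw [eLpNorm_exponent_top, eLpNormEssSup_const (1:ℂ) (NeZero.ne μ)]
    simp
  | cons j t hj ih =>
    rw [Finset.sum_cons] at hq
    set r : ENNReal := (∑ i ∈ t, 1 / P i)⁻¹ with hr
    have hr' : 1 / r = ∑ i ∈ t, 1 / P i := by rw [hr, one_div, inv_inv]
    have hT : AEStronglyMeasurable (fun x => ∏ i ∈ t, f i x) μ :=
      Finset.aestronglyMeasurable_fun_prod _ fun i hi => hf i (Finset.mem_cons_of_mem hi)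
    have hF : AEStronglyMeasurable (f j) μ := hf j (Finset.mem_cons_self j t)
    have key := eLpNorm_smul_le_mul_eLpNorm (p := P j) (q := r) (r := q)
      (f := fun x => ∏ i ∈ t, f i x) (φ := f j) hT hF (hpqr := ⟨by simp only [← one_div]; rw [hr', hq]⟩)
    have hih := ih (fun i hi => hf i (Finset.mem_cons_of_mem hi)) hr'
    calc eLpNorm (fun x => ∏ i ∈ Finset.cons j t hj, f i x) q μ
        = eLpNorm (f j • fun x => ∏ i ∈ t, f i x) q μ := by
          congr 1; funext x
          simp [Finset.prod_cons, Finset.prod_insert hj, Pi.smul_apply, smul_eq_mul]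
      _ ≤ eLpNorm (f j) (P j) μ * eLpNorm (fun x => ∏ i ∈ t, f i x) r μ := key
      _ ≤ eLpNorm (f j) (P j) μ * ∏ i ∈ t, eLpNorm (f i) (P i) μ := mul_le_mul_right hih _
      _ = ∏ i ∈ Finset.cons j t hj, eLpNorm (f i) (P i) μ := by rw [Finset.prod_cons]

/-- Lemma 5.1 (cross-norm estimate): for `g(x) = ∑_i ∏_j a_{ij}(x_j)` on `(ℝ/ℤ)^k` and
`f(x₁,…,x_{k−1}) = g(x₁,…,x_{k−1}, −x₁−⋯−x_{k−1})`, one has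
`‖f‖_{L^p} ≤ ∑_i ∏_j ‖a_{ij}‖_{L^{kp}}`. -/
theorem crossnorm_restriction_bound
    (k : ℕ) (hk : 2 ≤ k) (p : ENNReal) (hp1 : 1 ≤ p) (hptop : p ≠ ⊤)
    (N : ℕ) (hN : 1 ≤ N)
    (a : Fin N → Fin k → AddCircle (1 : ℝ) → ℂ)
    (ha : ∀ i j, MemLp (a i j) ((k : ENNReal) * p) volume) :
    eLpNorm
        (fun y : Fin (k - 1) → AddCircle (1 : ℝ) =>
          ∑ i : Fin N,
            (∏ j : Fin (k - 1), a i (Fin.castLE (Nat.sub_le k 1) j) (y j)) *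
              a i ⟨k - 1, by omega⟩ (-∑ j : Fin (k - 1), y j))
        p volume ≤
      ∑ i : Fin N, ∏ j : Fin k, eLpNorm (a i j) ((k : ENNReal) * p) volume := by
  obtain ⟨n, rfl⟩ : ∃ n, k = n + 2 := ⟨k - 2, by omega⟩
  -- the k maps: coordinates and the negated sum
  set T : Fin (n + 2) → (Fin (n + 1) → (AddCircle (1:ℝ))) → (AddCircle (1:ℝ)) :=
    fun j y => if h : (j : ℕ) < n + 1 then y ⟨j, h⟩ else -∑ j, y j with hT
  have hMP : ∀ j, MeasurePreserving (T j) volume volume := by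
    intro j
    by_cases h : (j : ℕ) < n + 1
    · simpa [hT, h, Nat.lt_succ_iff.mp h] using mp_eval (X := fun _ : Fin (n+1) => (AddCircle (1:ℝ))) ⟨j, h⟩
    · have : MeasurePreserving (fun y : Fin (n+1) → (AddCircle (1:ℝ)) => -∑ j, y j) volume volume :=
        (Measure.measurePreserving_neg volume).comp (mp_sum n)
      simpa [hT, h, show ¬ (j : ℕ) ≤ n by omega] using this
  have haesm : ∀ i j, AEStronglyMeasurable (fun y : Fin (n+1) → (AddCircle (1:ℝ)) => a i j (T j y)) volume :=
    fun i j => by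
      simpa [Function.comp_def] using
        (ha i j).aestronglyMeasurable.comp_measurePreserving (hMP j)
  have hbody : ∀ i : Fin N, (fun y : Fin (n+1) → (AddCircle (1:ℝ)) =>
      (∏ j : Fin (n + 1), a i (Fin.castLE (Nat.sub_le (n+2) 1) j) (y j)) *
        a i ⟨n + 1, by omega⟩ (-∑ j : Fin (n+1), y j))
      = fun y => ∏ j : Fin (n + 2), a i j (T j y) := by
    intro i
    funext y
    conv_rhs => rw [Fin.prod_univ_castSucc]
    congr 1
    · refine Finset.prod_congr rfl fun j _ => ?_
      have hlt : ((Fin.castSucc j : Fin (n+2)) : ℕ) < n + 1 := j.isLt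
      simp only [hT, hlt, dif_pos]
      rfl
    · have hlt : ¬ ((Fin.last (n+1) : Fin (n+2)) : ℕ) < n + 1 := by simp
      simp only [hT, hlt, dif_neg, not_false_iff]
      rfl
  have hk0 : ((n + 2 : ℕ) : ENNReal) ≠ 0 := by
    exact_mod_cast Nat.succ_ne_zero (n + 1)
  have hq : 1 / p = ∑ _j : Fin (n + 2), 1 / (((n + 2 : ℕ) : ENNReal) * p) := by
    rw [Finset.sum_const, Finset.card_univ, Fintype.card_fin, nsmul_eq_mul]
    rw [one_div, one_div, ENNReal.mul_inv (Or.inl hk0)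
      (Or.inl (ENNReal.natCast_ne_top _)), ← mul_assoc,
      ENNReal.mul_inv_cancel hk0 (ENNReal.natCast_ne_top _), one_mul]
  calc eLpNorm (fun y : Fin (n+1) → (AddCircle (1:ℝ)) => ∑ i : Fin N,
          (∏ j : Fin (n + 1), a i (Fin.castLE (Nat.sub_le (n+2) 1) j) (y j)) *
            a i ⟨n + 1, by omega⟩ (-∑ j : Fin (n+1), y j)) p volume
      = eLpNorm (∑ i : Fin N, fun y : Fin (n+1) → (AddCircle (1:ℝ)) => ∏ j : Fin (n+2), a i j (T j y)) p volume := by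
        congr 1
        funext y
        rw [Finset.sum_apply]
        exact Finset.sum_congr rfl fun i _ => congrFun (hbody i) y
    _ ≤ ∑ i : Fin N, eLpNorm (fun y : Fin (n+1) → (AddCircle (1:ℝ)) => ∏ j : Fin (n+2), a i j (T j y)) p volume :=
        eLpNorm_sum_le (fun i _ => Finset.aestronglyMeasurable_fun_prod _ fun j _ => haesm i j) hp1
    _ ≤ ∑ i : Fin N, ∏ j : Fin (n+2), eLpNorm (a i j) (((n + 2 : ℕ) : ENNReal) * p) volume := by
        refine Finset.sum_le_sum fun i _ => ?_
        have := holder_finset Finset.univ (fun j (y : Fin (n+1) → (AddCircle (1:ℝ))) => a i j (T j y))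
          (fun _ => ((n + 2 : ℕ) : ENNReal) * p) (fun j _ => haesm i j) hq
        refine this.trans ?_
        refine le_of_eq (Finset.prod_congr rfl fun j _ => ?_)
        exact eLpNorm_comp_measurePreserving (ha i j).aestronglyMeasurable (hMP j)
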